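/- arXiv:2303.12387 — 2 statements merged into one kernel-verified Lean document; each statement's English description precedes it below -/
import Mathlib

section
/- For n, m ≥ 0 and k, l ≥ 1, the monoids S_{n,k} and S_{m,l} are isomorphic if and only if (n, k) = (m, l), where S_{n,k} is the inverse monoid generated by x_{n,k} = [1,…,n] ∪ (n+1,…,n+k) inside I_{n+k}. -/
/-- The symmetric inverse monoid structure on partial bijections of a set. -/
instance pequivMonoid (α : Type*) : Monoid (PEquiv α α) where
  mul f g := f.trans g
  one := PEquiv.refl α
  mul_assoc := PEquiv.trans_assoc
  one_mul := PEquiv.refl_trans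
  mul_one := PEquiv.trans_refl

/-- `f` is a chain of length `m` (i.e. `m` pairs): there are distinct points
`c 0, …, c m` with `f` mapping `c i ↦ c (i+1)` and nothing else. -/
def IsChainPP {n : ℕ} (f : PEquiv (Fin n) (Fin n)) (m : ℕ) : Prop :=
  ∃ c : Fin (m + 1) → Fin n, Function.Injective c ∧
    ∀ a b : Fin n, f a = some b ↔ ∃ i : Fin m, a = c i.castSucc ∧ b = c i.succ


/-- The partial permutation \`[1,…,a] ∪ (a+1,…,a+b)\` of \`{1,…,a+b}\` (0-indexed): the
chain \`i ↦ i + 1\` on \`{0,…,a-1}\` together with the cyclic permutation of \`{a,…,a+b-1}\`. -/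
def IsChainCycle {a b : ℕ} (f : PEquiv (Fin (a + b)) (Fin (a + b))) : Prop :=
  ∀ i j : Fin (a + b), f i = some j ↔
    ((i.val + 1 < a ∧ j.val = i.val + 1) ∨
      (a ≤ i.val ∧ 0 < b ∧ j.val = a + ((i.val + 1 - a) % b)))


namespace SNKaux

def mkT (n k p d u s : ℕ) (i : Fin (n+k)) : Option (Fin (n+k)) :=
  if _h : p ≤ i.val ∧ i.val < p + d ∧ p + d ≤ n ∧ u + d ≤ n then
    some ⟨i.val - p + u, by omega⟩
  else if _h2 : n ≤ i.val ∧ 0 < k then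
    some ⟨n + (i.val - n + s) % k, by
      have := Nat.mod_lt (i.val - n + s) (show 0 < k by omega); omega⟩
  else none

lemma cyc_inv {k r x y : ℕ} (hk : 0 < k) (hx : x < k) (hy : y < k) :
    y = (x + r) % k ↔ x = (y + (k - r % k)) % k := by
  have hrk : r % k < k := Nat.mod_lt _ hk
  have hrr : r % k ≤ r := Nat.mod_le r k
  have hdiv : r - r % k = k * (r / k) := by
    have := Nat.div_add_mod r k; omega
  have hmul : (1 + r / k) * k = k + k * (r / k) := by ring
  constructor
  · rintro rfl
    rw [Nat.mod_add_mod]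
    have h : x + r + (k - r % k) = x + (1 + r / k) * k := by omega
    rw [h, Nat.add_mul_mod_self_right, Nat.mod_eq_of_lt hx]
  · rintro rfl
    rw [Nat.mod_add_mod]
    have h : y + (k - r % k) + r = y + (1 + r / k) * k := by omega
    rw [h, Nat.add_mul_mod_self_right, Nat.mod_eq_of_lt hy]

def mk (n k p d u r : ℕ) : PEquiv (Fin (n+k)) (Fin (n+k)) where
  toFun := mkT n k p d u r
  invFun := mkT n k u d p (k - r % k)
  inv a b := by
    simp only [mkT, Option.mem_def]
    split_ifs
    all_goals simp only [Option.some.injEq, Fin.ext_iff, Fin.val_mk, reduceCtorEq,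
      false_iff, iff_false, iff_true, true_iff, not_and, not_le, not_lt]
    any_goals omega
    all_goals
      have hk : 0 < k := by omega
      have hx : (a:ℕ) - n < k := by omega
      have hy : (b:ℕ) - n < k := by omega
      have hm1 : ((a:ℕ) - n + r) % k < k := Nat.mod_lt _ hk
      have hm2 : ((b:ℕ) - n + (k - r % k)) % k < k := Nat.mod_lt _ hk
      constructor
      · intro h
        have := (cyc_inv (r := r) hk hx hy).mpr (by omega)
        omega
      · intro h
        have := (cyc_inv (r := r) hk hx hy).mp (by omega)
        omega

lemma mk_apply (n k p d u r : ℕ) (i : Fin (n+k)) : (mk n k p d u r) i = mkT n k p d u r i := by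
  rfl

end SNKaux

namespace SNKaux2
open SNKaux

lemma mk_coe (n k p d u r : ℕ) : ⇑(mk n k p d u r) = mkT n k p d u r := rfl

lemma cyc_comp (n k r r' x : ℕ) : n + ((n + (x + r) % k - n + r') % k) = n + ((x + (r + r')) % k) := by
  rw [Nat.add_sub_cancel_left, Nat.mod_add_mod, Nat.add_assoc]

lemma mk_trans_mk {n k : ℕ} (p d u r p' d' u' r' : ℕ)
    (Hd : d = 0 ∨ (p + d ≤ n ∧ u + d ≤ n))
    (Hd' : d' = 0 ∨ (p' + d' ≤ n ∧ u' + d' ≤ n)) :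
    (mk n k p d u r).trans (mk n k p' d' u' r') =
      mk n k (p + (p' - u)) (min (p + d) (p + (p' + d' - u)) - (p + (p' - u)))
        (p + (p' - u) + u - (p + p') + u') (r + r') := by
  apply PEquiv.ext; intro i
  show (mkT n k p d u r i).bind (mk n k p' d' u' r') = mkT n k _ _ _ _ i
  have hcyc := cyc_comp n k r r' (i.val - n)
  simp only [mkT]
  split_ifs <;>
    simp only [Option.bind_some, Option.bind_none, mk_coe, mkT, Fin.val_mk] <;>
    try split_ifs
  all_goals
    simp -failIfUnchanged only [Option.some.injEq, Fin.ext_iff, Fin.val_mk, reduceCtorEq, false_iff,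
      iff_false] at *
  all_goals omega

end SNKaux2

namespace SNKaux3
open SNKaux SNKaux2

lemma mkT_eq_some_iff {n k : ℕ} (p d u s : ℕ) (i j : Fin (n+k)) :
    mkT n k p d u s i = some j ↔
      (p ≤ i.val ∧ i.val < p + d ∧ p + d ≤ n ∧ u + d ≤ n ∧ j.val = i.val - p + u) ∨
      (n ≤ i.val ∧ 0 < k ∧ j.val = n + (i.val - n + s) % k) := by
  simp only [mkT]
  split_ifs <;>
    simp only [Option.some.injEq, Fin.ext_iff, Fin.val_mk, reduceCtorEq, false_iff] <;>
    omega

lemma mk_empty {n k : ℕ} (p d u r : ℕ) (h : d = 0 ∨ n < p + d ∨ n < u + d) :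
    mk n k p d u r = mk n k 0 0 0 r := by
  apply PEquiv.ext; intro i
  show mkT n k p d u r i = mkT n k 0 0 0 r i
  simp only [mkT]
  split_ifs <;> first | rfl | omega

lemma mk_rot_congr {n k : ℕ} (p d u r r' : ℕ) (h : r % k = r' % k) :
    mk n k p d u r = mk n k p d u r' := by
  apply PEquiv.ext; intro i
  show mkT n k p d u r i = mkT n k p d u r' i
  have h1 : (i.val - n + r) % k = (i.val - n + r') % k := by
    rw [← Nat.add_mod_mod, h, Nat.add_mod_mod]
  simp only [mkT, h1]

lemma mk_symm {n k : ℕ} (p d u r : ℕ) :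
    (mk n k p d u r).symm = mk n k u d p (k - r % k) := by
  apply PEquiv.ext; intro i
  rfl

end SNKaux3

namespace SNKaux4
open SNKaux SNKaux2 SNKaux3

lemma mk_one {n k : ℕ} : mk n k 0 n 0 0 = 1 := by
  apply PEquiv.ext; intro i
  show mkT n k 0 n 0 0 i = some i
  have hm : i.val ≥ n → (i.val - n + 0) % k = i.val - n :=
    fun h => Nat.mod_eq_of_lt (by omega)
  have hb := i.isLt
  simp only [mkT]
  split_ifs with h1 h2 <;>
    (try simp only [Option.some.injEq, Fin.ext_iff, Fin.val_mk, reduceCtorEq]) <;> omega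

lemma mul_eq_trans {α : Type*} (f g : PEquiv α α) : f * g = f.trans g := rfl

lemma icc_eq_mk {n k : ℕ} (f : PEquiv (Fin (n+k)) (Fin (n+k)))
    (hf : IsChainCycle f) : f = mk n k 0 (n-1) (min 1 n) 1 := by
  apply PEquiv.ext; intro i
  have key : ∀ j, f i = some j ↔ (mk n k 0 (n-1) (min 1 n) 1) i = some j := by
    intro j
    rw [hf i j, mk_apply, mkT_eq_some_iff]
    have hmod : i.val ≥ n → (i.val + 1 - n) % k = (i.val - n + 1) % k := by
      intro h
      congr 1
      omega
    constructor
    · rintro (⟨h1, h2⟩ | ⟨h1, h2, h3⟩)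
      · left; omega
      · right; refine ⟨h1, h2, ?_⟩; rw [h3, hmod h1]
    · rintro (⟨h1, h2, h3, h4, h5⟩ | ⟨h1, h2, h3⟩)
      · left; omega
      · right; refine ⟨h1, h2, ?_⟩; rw [h3, hmod h1]
  rcases h1 : f i with _ | j <;> rcases h2 : (mk n k 0 (n-1) (min 1 n) 1) i with _ | j'
  · rfl
  · exact absurd ((key j').mpr h2) (by simp [h1])
  · exact absurd ((key j).mp h1) (by simp [h2])
  · rw [← h2, (key j).mp h1]

end SNKaux4

namespace SNKaux5
open SNKaux SNKaux2 SNKaux3 SNKaux4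

lemma mk_param_congr {n k a b c r a' b' c' r' : ℕ} (h1 : a = a') (h2 : b = b')
    (h3 : c = c') (h4 : r = r') : mk n k a b c r = mk n k a' b' c' r' := by
  subst h1; subst h2; subst h3; subst h4; rfl

lemma add_k_sub_mod {k : ℕ} (hk : 0 < k) (a : ℕ) : (a + (k - a % k)) % k = 0 := by
  have h1 := Nat.div_add_mod a k
  have h2 : a % k < k := Nat.mod_lt _ hk
  have h4 : k * (a / k + 1) = k * (a / k) + k := by ring
  have h3 : a + (k - a % k) = k * (a / k + 1) := by omega
  rw [h3, Nat.mul_mod_right]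

lemma modeq_of_multiple {k : ℕ} (hk : 0 < k) (a : ℕ) : a + (k - a % k) ≡ 0 [MOD k] := by
  show _ % k = 0 % k
  rw [add_k_sub_mod hk a, Nat.zero_mod]

variable {n k : ℕ}

/-- the generator -/
abbrev X (n k : ℕ) : PEquiv (Fin (n+k)) (Fin (n+k)) := mk n k 0 (n-1) (min 1 n) 1

lemma x_pow (s : ℕ) : (X n k) ^ s = mk n k 0 (n - s) (min s n) s := by
  induction s with
  | zero =>
    simp only [pow_zero, Nat.sub_zero, Nat.zero_min, Nat.min_zero]
    rw [← mk_one]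
  | succ s ih =>
    rw [pow_succ, ih, mul_eq_trans, X,
      mk_trans_mk _ _ _ _ _ _ _ _ (by omega) (by omega)]
    by_cases h : s + 1 ≤ n
    · exact mk_param_congr (by omega) (by omega) (by omega) (by omega)
    · rw [mk_empty _ _ _ _ (by omega),
        mk_empty 0 (n - (s+1)) (min (s+1) n) (s+1) (by omega)]

lemma symm_pow (q : PEquiv (Fin (n+k)) (Fin (n+k))) (s : ℕ) :
    (q.symm) ^ s = (q ^ s).symm := by
  induction s with
  | zero =>
    show _ = (PEquiv.refl _).symm
    rw [PEquiv.symm_refl]; rfl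
  | succ s ih =>
    rw [pow_succ, pow_succ', ih, mul_eq_trans, mul_eq_trans, PEquiv.symm_trans_rev]

lemma y_pow (s : ℕ) : ((X n k).symm) ^ s = mk n k (min s n) (n - s) 0 (k - s % k) := by
  rw [symm_pow, x_pow, mk_symm]

end SNKaux5

namespace SNKaux6
open SNKaux SNKaux2 SNKaux3 SNKaux4 SNKaux5

variable {n k : ℕ}

abbrev Cl (n k : ℕ) : Submonoid (PEquiv (Fin (n+k)) (Fin (n+k))) :=
  Submonoid.closure {X n k, (X n k).symm}

lemma symm_mem_cl {q : PEquiv (Fin (n+k)) (Fin (n+k))} (hq : q ∈ Cl n k) :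
    q.symm ∈ Cl n k := by
  induction hq using Submonoid.closure_induction with
  | mem x hx =>
    rcases hx with rfl | rfl
    · exact Submonoid.subset_closure (Or.inr rfl)
    · rw [PEquiv.symm_symm]
      exact Submonoid.subset_closure (Or.inl rfl)
  | one =>
    have : (1 : PEquiv (Fin (n+k)) (Fin (n+k))).symm = 1 := PEquiv.symm_refl
    rw [this]; exact Submonoid.one_mem _
  | mul a b ha hb iha ihb =>
    have : (a * b).symm = b.symm * a.symm := PEquiv.symm_trans_rev a b
    rw [this]; exact Submonoid.mul_mem _ ihb iha

lemma rot_inv_inv {k r : ℕ} (hk : 0 < k) : (k - (k - r % k) % k) % k = r % k := by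
  have hρ : r % k < k := Nat.mod_lt _ hk
  by_cases h0 : r % k = 0
  · rw [h0, Nat.sub_zero, Nat.mod_self, Nat.sub_zero, Nat.mod_self]
  · have h1 : (k - r % k) % k = k - r % k := Nat.mod_eq_of_lt (by omega)
    rw [h1, show k - (k - r % k) = r % k by omega, Nat.mod_mod_of_dvd r (dvd_refl k)]

lemma mk_mem_cl_le (hk : 0 < k) (p d u r : ℕ) (hd : 0 < d)
    (hpd : p + d ≤ n) (hud : u + d ≤ n) (hcong : (p + r) % k = u % k) (hup : p ≤ u) :
    mk n k p d u r ∈ Cl n k := by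
  have W : ((X n k).symm)^p * (X n k)^(n-d) * ((X n k).symm)^(n-p-d) * (X n k)^(u-p)
      ∈ Cl n k := by
    have hx := Submonoid.subset_closure (s := {X n k, (X n k).symm}) (Or.inl rfl)
    have hy := Submonoid.subset_closure (s := {X n k, (X n k).symm}) (Or.inr rfl)
    exact mul_mem (mul_mem (mul_mem (pow_mem hy p) (pow_mem hx _)) (pow_mem hy _))
      (pow_mem hx _)
  have hA : ((X n k).symm)^p * (X n k)^(n-d) =
      mk n k p d (n-d) ((k - p % k) + (n-d)) := by
    rw [y_pow, x_pow, mul_eq_trans, mk_trans_mk _ _ _ _ _ _ _ _ (by omega) (by omega)]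
    exact mk_param_congr (by omega) (by omega) (by omega) rfl
  have hB : mk n k p d (n-d) ((k - p % k) + (n-d)) * ((X n k).symm)^(n-p-d) =
      mk n k p d p ((k - p % k) + (n-d) + (k - (n-p-d) % k)) := by
    rw [y_pow, mul_eq_trans, mk_trans_mk _ _ _ _ _ _ _ _ (by omega) (by omega)]
    exact mk_param_congr (by omega) (by omega) (by omega) rfl
  have hC : mk n k p d p ((k - p % k) + (n-d) + (k - (n-p-d) % k)) * (X n k)^(u-p) =
      mk n k p d u ((k - p % k) + (n-d) + (k - (n-p-d) % k) + (u-p)) := by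
    rw [x_pow, mul_eq_trans, mk_trans_mk _ _ _ _ _ _ _ _ (by omega) (by omega)]
    exact mk_param_congr (by omega) (by omega) (by omega) rfl
  have hrot : mk n k p d u ((k - p % k) + (n-d) + (k - (n-p-d) % k) + (u-p)) =
      mk n k p d u r := by
    apply mk_rot_congr
    have c1 : p + r ≡ u [MOD k] := hcong
    have e1 : p + (k - p % k) ≡ 0 [MOD k] := modeq_of_multiple hk p
    have e2 : (n-p-d) + (k - (n-p-d) % k) ≡ 0 [MOD k] := modeq_of_multiple hk _
    have main2 : r + (p + (n-p-d) + p) ≡ 0 + 0 + ((n-d) + (u-p) + p) [MOD k] := by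
      calc r + (p + (n-p-d) + p) = (p + r) + ((n-p-d) + p) := by omega
        _ ≡ u + ((n-p-d) + p) [MOD k] := Nat.ModEq.add_right _ c1
        _ = 0 + 0 + ((n-d) + (u-p) + p) := by omega
    have main : ((k - p % k) + (n-d) + (k - (n-p-d) % k) + (u-p)) + (p + (n-p-d) + p)
        ≡ r + (p + (n-p-d) + p) [MOD k] := by
      calc ((k - p % k) + (n-d) + (k - (n-p-d) % k) + (u-p)) + (p + (n-p-d) + p)
          = (p + (k - p % k)) + ((n-p-d) + (k - (n-p-d) % k)) + ((n-d) + (u-p) + p) := by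
            omega
        _ ≡ 0 + 0 + ((n-d) + (u-p) + p) [MOD k] :=
            Nat.ModEq.add (Nat.ModEq.add e1 e2) (Nat.ModEq.refl _)
        _ ≡ r + (p + (n-p-d) + p) [MOD k] := main2.symm
    exact Nat.ModEq.add_right_cancel' _ main
  rw [← hrot, ← hC, ← hB, ← hA]
  exact W

lemma mk_mem_cl (hk : 0 < k) (p d u r : ℕ)
    (h : 0 < d → p + d ≤ n ∧ u + d ≤ n ∧ (p + r) % k = u % k) :
    mk n k p d u r ∈ Cl n k := by
  rcases Nat.eq_zero_or_pos d with hd | hd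
  · -- pure rotation: equals X ^ (n*k + r)
    subst hd
    have hnk : n ≤ n * k := Nat.le_mul_of_pos_right n hk
    have h1 : mk n k p 0 u r = mk n k 0 (n - (n*k+r)) (min (n*k+r) n) (n*k+r) := by
      rw [mk_empty _ _ _ _ (Or.inl rfl),
        mk_empty 0 (n - (n*k+r)) (min (n*k+r) n) (n*k+r) (Or.inl (by omega))]
      exact mk_rot_congr _ _ _ _ _ (by rw [show n*k = k*n from Nat.mul_comm n k, Nat.mul_add_mod])
    rw [h1, ← x_pow]
    exact Submonoid.pow_mem _
      (Submonoid.subset_closure (s := {X n k, (X n k).symm}) (Or.inl rfl)) _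
  · obtain ⟨hpd, hud, hcong⟩ := h hd
    rcases le_or_gt p u with hup | hup
    · exact mk_mem_cl_le hk p d u r hd hpd hud hcong hup
    · have c1 : p + r ≡ u [MOD k] := hcong
      have e3 : r + (k - r % k) ≡ 0 [MOD k] := modeq_of_multiple hk r
      have hcong2 : (u + (k - r % k)) % k = p % k := by
        have main : (u + (k - r % k)) + r ≡ p + r [MOD k] := by
          calc (u + (k - r % k)) + r = u + (r + (k - r % k)) := by omega
            _ ≡ u + 0 [MOD k] := Nat.ModEq.add_left _ e3
            _ = u := by omega
            _ ≡ p + r [MOD k] := c1.symm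
        exact Nat.ModEq.add_right_cancel' _ main
      have hm := mk_mem_cl_le hk u d p (k - r % k) hd hud hpd hcong2 (by omega)
      have := symm_mem_cl hm
      rw [mk_symm] at this
      rwa [mk_rot_congr p d u r (k - (k - r % k) % k) (rot_inv_inv hk).symm]

end SNKaux6

namespace SNKaux7
open SNKaux SNKaux2 SNKaux3 SNKaux4 SNKaux5 SNKaux6

variable {n k : ℕ}

def inS (n k : ℕ) (q : PEquiv (Fin (n+k)) (Fin (n+k))) : Prop :=
  ∃ p d u r, (0 < d → p + d ≤ n ∧ u + d ≤ n ∧ (p + r) % k = u % k) ∧ q = mk n k p d u r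

lemma inS_mul {q q' : PEquiv (Fin (n+k)) (Fin (n+k))} (hq : inS n k q) (hq' : inS n k q') :
    inS n k (q * q') := by
  obtain ⟨p, d, u, r, h, rfl⟩ := hq
  obtain ⟨p', d', u', r', h', rfl⟩ := hq'
  refine ⟨p + (p' - u), min (p + d) (p + (p' + d' - u)) - (p + (p' - u)),
    p + (p' - u) + u - (p + p') + u', r + r', ?_, ?_⟩
  · intro hD
    have hd : 0 < d := by omega
    have hd' : 0 < d' := by omega
    obtain ⟨h1, h2, h3⟩ := h hd
    obtain ⟨h1', h2', h3'⟩ := h' hd'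
    refine ⟨by omega, by omega, ?_⟩
    have c1 : p + r ≡ u [MOD k] := h3
    have c2 : p' + r' ≡ u' [MOD k] := h3'
    have main : (p + (p' - u) + (r + r')) + (p + p') ≡
        (p + (p' - u) + u - (p + p') + u') + (p + p') [MOD k] := by
      calc (p + (p' - u) + (r + r')) + (p + p')
          = (p + (p' - u)) + (p + r) + (p' + r') := by omega
        _ ≡ (p + (p' - u)) + u + u' [MOD k] :=
            Nat.ModEq.add (Nat.ModEq.add_left _ c1) c2
        _ = (p + (p' - u) + u - (p + p') + u') + (p + p') := by omega
    exact Nat.ModEq.add_right_cancel' _ main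
  · rw [mul_eq_trans, mk_trans_mk _ _ _ _ _ _ _ _ (by omega) (by omega)]

lemma inS_one : inS n k 1 :=
  ⟨0, n, 0, 0, fun _ => ⟨by omega, by omega, rfl⟩, mk_one.symm⟩

def Smon (n k : ℕ) : Submonoid (PEquiv (Fin (n+k)) (Fin (n+k))) where
  carrier := {q | inS n k q}
  mul_mem' := inS_mul
  one_mem' := inS_one

lemma mem_cl_iff (hk : 0 < k) (q : PEquiv (Fin (n+k)) (Fin (n+k))) :
    q ∈ Cl n k ↔ inS n k q := by
  constructor
  · intro hq
    have hle : Cl n k ≤ Smon n k := by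
      apply Submonoid.closure_le.mpr
      rintro x (rfl | rfl)
      · exact ⟨0, n-1, min 1 n, 1, fun hd => ⟨by omega, by omega, by
          rw [show min 1 n = 1 by omega]⟩, rfl⟩
      · rw [X, mk_symm]
        exact ⟨min 1 n, n-1, 0, k - 1 % k, fun hd => ⟨by omega, by omega, by
          rw [show min 1 n = 1 by omega, Nat.zero_mod, add_k_sub_mod hk 1]⟩, rfl⟩
    exact hle hq
  · rintro ⟨p, d, u, r, h, rfl⟩
    exact mk_mem_cl hk p d u r h

end SNKaux7

namespace SNKaux8
open SNKaux SNKaux2 SNKaux3 SNKaux4 SNKaux5 SNKaux6 SNKaux7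

variable {n k : ℕ}

lemma mk_inj (hk : 0 < k) {p d u r p' d' u' r' : ℕ}
    (hr : r < k) (hr' : r' < k)
    (h : 0 < d → p + d ≤ n ∧ u + d ≤ n) (h' : 0 < d' → p' + d' ≤ n ∧ u' + d' ≤ n)
    (heq : mk n k p d u r = mk n k p' d' u' r') :
    r = r' ∧ d = d' ∧ (0 < d → p = p' ∧ u = u') := by
  have H : ∀ (i j : ℕ) (hi : i < n + k) (hj : j < n + k),
      ((p ≤ i ∧ i < p + d ∧ p + d ≤ n ∧ u + d ≤ n ∧ j = i - p + u) ∨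
        (n ≤ i ∧ 0 < k ∧ j = n + (i - n + r) % k)) ↔
      ((p' ≤ i ∧ i < p' + d' ∧ p' + d' ≤ n ∧ u' + d' ≤ n ∧ j = i - p' + u') ∨
        (n ≤ i ∧ 0 < k ∧ j = n + (i - n + r') % k)) := by
    intro i j hi hj
    have h1 := mkT_eq_some_iff (n := n) (k := k) p d u r ⟨i, hi⟩ ⟨j, hj⟩
    have h2 := mkT_eq_some_iff (n := n) (k := k) p' d' u' r' ⟨i, hi⟩ ⟨j, hj⟩
    have h3 : mkT n k p d u r ⟨i, hi⟩ = mkT n k p' d' u' r' ⟨i, hi⟩ := by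
      show (mk n k p d u r) ⟨i, hi⟩ = (mk n k p' d' u' r') ⟨i, hi⟩
      rw [heq]
    simp only [Fin.val_mk] at h1 h2
    rw [← h1, h3, h2]
  -- rotation
  have mr : r % k = r := Nat.mod_eq_of_lt hr
  have mr' : r' % k = r' := Nat.mod_eq_of_lt hr'
  have hrot : r = r' := by
    have := (H n (n + r % k) (by omega) (by omega)).mp
      (Or.inr ⟨le_rfl, hk, by rw [Nat.sub_self, Nat.zero_add]⟩)
    rw [Nat.sub_self, Nat.zero_add] at this
    omega
  refine ⟨hrot, ?_, ?_⟩
  · -- d = d'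
    rcases Nat.eq_zero_or_pos d with hd | hd <;> rcases Nat.eq_zero_or_pos d' with hd' | hd'
    · omega
    · obtain ⟨h1', h2'⟩ := h' hd'
      have := (H p' (u') (by omega) (by omega)).mpr (Or.inl (by omega))
      omega
    · obtain ⟨h1, h2⟩ := h hd
      have := (H p u (by omega) (by omega)).mp (Or.inl (by omega))
      omega
    · obtain ⟨h1, h2⟩ := h hd
      obtain ⟨h1', h2'⟩ := h' hd'
      have e1 := (H p u (by omega) (by omega)).mp (Or.inl (by omega))
      have e1' := (H p' u' (by omega) (by omega)).mpr (Or.inl (by omega))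
      have e2 := (H (p + d - 1) (u + d - 1) (by omega) (by omega)).mp (Or.inl (by omega))
      have e2' := (H (p' + d' - 1) (u' + d' - 1) (by omega) (by omega)).mpr (Or.inl (by omega))
      omega
  · intro hd
    obtain ⟨h1, h2⟩ := h hd
    have e1 := (H p u (by omega) (by omega)).mp (Or.inl (by omega))
    rcases Nat.eq_zero_or_pos d' with hd' | hd'
    · omega
    · obtain ⟨h1', h2'⟩ := h' hd'
      have e1' := (H p' u' (by omega) (by omega)).mpr (Or.inl (by omega))
      omega

end SNKaux8

namespace SNKaux9
open SNKaux SNKaux2 SNKaux3 SNKaux4 SNKaux5 SNKaux6 SNKaux7 SNKaux8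

variable {n k : ℕ}

/-- parameters (p, u, d-1) of nonempty-chain elements -/
def ChainP (n : ℕ) := {x : Fin n × Fin n × Fin n // x.1.val + x.2.2.val < n ∧ x.2.1.val + x.2.2.val < n}

/-- parameters (p, d-1) of nontrivial idempotents -/
def IdemP (n : ℕ) := {x : Fin n × Fin n // x.1.val + x.2.val < n}

instance : Fintype (ChainP n) := by unfold ChainP; infer_instance
instance : Fintype (IdemP n) := by unfold IdemP; infer_instance

/-- canonical rotation congruent to `u - p` -/
def rc (k p u : ℕ) : ℕ := (u + (k - p % k)) % k

lemma rc_lt (hk : 0 < k) (p u : ℕ) : rc k p u < k := Nat.mod_lt _ hk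

lemma rc_spec (hk : 0 < k) (p u : ℕ) : (p + rc k p u) % k = u % k := by
  show (p + (u + (k - p % k)) % k) % k = u % k
  rw [Nat.add_mod_mod]
  have e1 : p + (k - p % k) ≡ 0 [MOD k] := modeq_of_multiple hk p
  calc (p + (u + (k - p % k))) % k = ((p + (k - p % k)) + u) % k := by
        congr 1; omega
    _ = (0 + u) % k := Nat.ModEq.add_right u e1
    _ = u % k := by rw [Nat.zero_add]

/-- canonical rotation uniqueness -/
lemma rot_unique (hk : 0 < k) {p u r r' : ℕ} (hr : r < k) (hr' : r' < k)
    (e : (p + r) % k = u % k) (e' : (p + r') % k = u % k) : r = r' := by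
  have : r ≡ r' [MOD k] := Nat.ModEq.add_left_cancel' p (e.trans e'.symm)
  have h1 : r % k = r' % k := this
  rw [Nat.mod_eq_of_lt hr, Nat.mod_eq_of_lt hr'] at h1
  exact h1

def toP (n k : ℕ) : Fin k ⊕ ChainP n → PEquiv (Fin (n+k)) (Fin (n+k))
  | .inl r => mk n k 0 0 0 r.val
  | .inr x => mk n k x.1.1.val (x.1.2.2.val + 1) x.1.2.1.val (rc k x.1.1.val x.1.2.1.val)

lemma toP_mem (hk : 0 < k) (a : Fin k ⊕ ChainP n) : toP n k a ∈ Cl n k := by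
  rcases a with r | x
  · exact (mem_cl_iff hk _).mpr ⟨0, 0, 0, r.val, by omega, rfl⟩
  · exact (mem_cl_iff hk _).mpr ⟨_, _, _, _,
      fun _ => ⟨by have := x.2.1; omega, by have := x.2.2; omega,
        rc_spec hk _ _⟩, rfl⟩

lemma toP_inj (hk : 0 < k) : Function.Injective (toP n k) := by
  rintro (r | x) (r' | x') heq
  · obtain ⟨h1, -, -⟩ := mk_inj hk r.isLt r'.isLt (by omega) (by omega) heq
    exact congrArg Sum.inl (Fin.ext h1)
  · obtain ⟨-, h2, -⟩ := mk_inj hk r.isLt (rc_lt hk _ _)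
      (by omega) (fun _ => ⟨by have := x'.2.1; omega, by have := x'.2.2; omega⟩) heq
    omega
  · obtain ⟨-, h2, -⟩ := mk_inj hk (rc_lt hk _ _) r'.isLt
      (fun _ => ⟨by have := x.2.1; omega, by have := x.2.2; omega⟩) (by omega) heq
    omega
  · obtain ⟨h1, h2, h3⟩ := mk_inj hk (rc_lt hk _ _) (rc_lt hk _ _)
      (fun _ => ⟨by have := x.2.1; omega, by have := x.2.2; omega⟩)
      (fun _ => ⟨by have := x'.2.1; omega, by have := x'.2.2; omega⟩) heq
    obtain ⟨h4, h5⟩ := h3 (by omega)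
    congr 1
    exact Subtype.ext (by
      ext <;> simp_all)

lemma toP_surj (hk : 0 < k) (q : PEquiv (Fin (n+k)) (Fin (n+k))) (hq : q ∈ Cl n k) :
    ∃ a, toP n k a = q := by
  obtain ⟨p, d, u, r, h, rfl⟩ := (mem_cl_iff hk _).mp hq
  rcases Nat.eq_zero_or_pos d with hd | hd
  · subst hd
    refine ⟨.inl ⟨r % k, Nat.mod_lt _ hk⟩, ?_⟩
    show mk n k 0 0 0 (r % k) = mk n k p 0 u r
    rw [mk_empty p 0 u r (Or.inl rfl)]
    exact mk_rot_congr _ _ _ _ _ (Nat.mod_mod_of_dvd r (dvd_refl k))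
  · obtain ⟨h1, h2, h3⟩ := h hd
    refine ⟨.inr ⟨(⟨p, by omega⟩, ⟨u, by omega⟩, ⟨d - 1, by omega⟩), by constructor <;> simp <;> omega⟩, ?_⟩
    show mk n k p (d - 1 + 1) u (rc k p u) = mk n k p d u r
    have : (p + rc k p u) % k = (p + r) % k := by rw [rc_spec hk, h3]
    rw [mk_param_congr rfl (by omega : d - 1 + 1 = d) rfl rfl]
    apply mk_rot_congr
    exact Nat.ModEq.add_left_cancel' p (this : _)

end SNKaux9

namespace SNKaux10
open SNKaux SNKaux2 SNKaux3 SNKaux4 SNKaux5 SNKaux6 SNKaux7 SNKaux8 SNKaux9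

variable {n k : ℕ}

def toI (n k : ℕ) : Option (IdemP n) → PEquiv (Fin (n+k)) (Fin (n+k))
  | .none => mk n k 0 0 0 0
  | .some x => mk n k x.1.1.val (x.1.2.val + 1) x.1.1.val 0

lemma toI_mem (hk : 0 < k) (a : Option (IdemP n)) : toI n k a ∈ Cl n k := by
  rcases a with - | ⟨⟨a1, a2⟩, hx⟩
  · exact (mem_cl_iff hk _).mpr ⟨0, 0, 0, 0, by omega, rfl⟩
  · have hx' : a1.val + a2.val < n := hx
    exact (mem_cl_iff hk _).mpr ⟨a1.val, a2.val + 1, a1.val, 0,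
      fun _ => ⟨by omega, by omega, rfl⟩, rfl⟩

lemma toI_idem (a : Option (IdemP n)) : toI n k a * toI n k a = toI n k a := by
  rcases a with - | x
  · show mk n k 0 0 0 0 * mk n k 0 0 0 0 = mk n k 0 0 0 0
    rw [mul_eq_trans, mk_trans_mk _ _ _ _ _ _ _ _ (by omega) (by omega)]
    exact mk_param_congr (by omega) (by omega) (by omega) (by omega)
  · obtain ⟨⟨a1, a2⟩, hx⟩ := x
    have hx' : a1.val + a2.val < n := hx
    show mk n k a1.val (a2.val + 1) a1.val 0 * mk n k a1.val (a2.val + 1) a1.val 0 =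
      mk n k a1.val (a2.val + 1) a1.val 0
    rw [mul_eq_trans, mk_trans_mk _ _ _ _ _ _ _ _ (by omega) (by omega)]
    exact mk_param_congr (by omega) (by omega) (by omega) (by omega)

lemma toI_inj (hk : 0 < k) : Function.Injective (toI n k) := by
  rintro (- | x) (- | x') heq
  · rfl
  · obtain ⟨-, h2, -⟩ := mk_inj hk hk hk (by omega)
      (fun _ => ⟨by have := x'.2; omega, by have := x'.2; omega⟩) heq
    omega
  · obtain ⟨-, h2, -⟩ := mk_inj hk hk hk
      (fun _ => ⟨by have := x.2; omega, by have := x.2; omega⟩) (by omega) heq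
    omega
  · obtain ⟨-, h2, h3⟩ := mk_inj hk hk hk
      (fun _ => ⟨by have := x.2; omega, by have := x.2; omega⟩)
      (fun _ => ⟨by have := x'.2; omega, by have := x'.2; omega⟩) heq
    obtain ⟨h4, -⟩ := h3 (by omega)
    congr 1
    exact Subtype.ext (by ext <;> simp_all)

lemma toI_surj (hk : 0 < k) (q : PEquiv (Fin (n+k)) (Fin (n+k))) (hq : q ∈ Cl n k)
    (hidem : q * q = q) : ∃ a, toI n k a = q := by
  obtain ⟨p, d, u, r, h, rfl⟩ := (mem_cl_iff hk _).mp hq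
  -- normalize rotation
  have hnorm : mk n k p d u r = mk n k p d u (r % k) :=
    mk_rot_congr _ _ _ _ _ (Nat.mod_mod_of_dvd r (dvd_refl k)).symm
  rw [hnorm] at hidem ⊢
  set s := r % k with hs
  have hsk : s < k := Nat.mod_lt _ hk
  rcases Nat.eq_zero_or_pos d with hd | hd
  · subst hd
    have he : mk n k p 0 u s = mk n k 0 0 0 s := mk_empty _ _ _ _ (Or.inl rfl)
    rw [he] at hidem ⊢
    rw [mul_eq_trans, mk_trans_mk _ _ _ _ _ _ _ _ (by omega) (by omega)] at hidem
    have hidem' : mk n k 0 0 0 ((s + s) % k) = mk n k 0 0 0 s := by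
      rw [← hidem]
      refine (mk_rot_congr _ _ _ _ _ ?_).symm.trans
        (mk_param_congr (by omega) (by omega) (by omega) rfl)
      exact (Nat.mod_mod_of_dvd _ (dvd_refl k)).symm
    obtain ⟨h1, -, -⟩ := mk_inj hk (Nat.mod_lt _ hk) hsk (by omega) (by omega) hidem'
    have hs0 : s = 0 := by
      have : s + s ≡ 0 + s [MOD k] := by
        show (s + s) % k = (0 + s) % k
        rw [h1, Nat.zero_add, Nat.mod_eq_of_lt hsk]
      have h2 : s ≡ 0 [MOD k] := Nat.ModEq.add_right_cancel' s this
      have h3 : s % k = 0 % k := h2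
      rw [Nat.mod_eq_of_lt hsk, Nat.zero_mod] at h3
      exact h3
    exact ⟨.none, by rw [hs0]; rfl⟩
  · obtain ⟨h1, h2, h3'⟩ := h hd
    have h3 : (p + s) % k = u % k := by rw [hs, Nat.add_mod_mod, h3']
    rw [mul_eq_trans, mk_trans_mk _ _ _ _ _ _ _ _ (by omega) (by omega)] at hidem
    have hidem' : mk n k (p + (p - u)) (min (p + d) (p + (p + d - u)) - (p + (p - u)))
        (p + (p - u) + u - (p + p) + u) ((s + s) % k) = mk n k p d u s := by
      rw [← hidem]
      exact mk_rot_congr _ _ _ _ _ (Nat.mod_mod_of_dvd _ (dvd_refl k))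
    obtain ⟨hr1, hr2, hr3⟩ := mk_inj hk (Nat.mod_lt _ hk) hsk
      (fun hD => ⟨by omega, by omega⟩) (fun _ => ⟨h1, h2⟩) hidem'
    obtain ⟨hp, hu⟩ := hr3 (by omega)
    have hup : u = p := by omega
    have hs0 : s = 0 := by
      have : s + s ≡ 0 + s [MOD k] := by
        show (s + s) % k = (0 + s) % k
        rw [hr1, Nat.zero_add, Nat.mod_eq_of_lt hsk]
      have h2' : s ≡ 0 [MOD k] := Nat.ModEq.add_right_cancel' s this
      have h3'' : s % k = 0 % k := h2'
      rw [Nat.mod_eq_of_lt hsk, Nat.zero_mod] at h3''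
      exact h3''
    refine ⟨.some ⟨(⟨p, by omega⟩, ⟨d - 1, by omega⟩), by simpa using by omega⟩, ?_⟩
    show mk n k p (d - 1 + 1) p 0 = mk n k p d u s
    exact mk_param_congr rfl (by omega) (by omega) (by omega)

end SNKaux10

namespace SNKaux11
open SNKaux SNKaux2 SNKaux3 SNKaux4 SNKaux5 SNKaux6 SNKaux7 SNKaux8 SNKaux9 SNKaux10

variable {n k : ℕ}

lemma card_cl (hk : 0 < k) : Nat.card (Cl n k) = k + Fintype.card (ChainP n) := by
  have e : (Fin k ⊕ ChainP n) ≃ ↥(Cl n k) := by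
    refine Equiv.ofBijective (fun a => ⟨toP n k a, toP_mem hk a⟩) ⟨?_, ?_⟩
    · intro a b hab
      exact toP_inj hk (congrArg Subtype.val hab)
    · rintro ⟨q, hq⟩
      obtain ⟨a, ha⟩ := toP_surj hk q hq
      exact ⟨a, Subtype.ext ha⟩
  rw [← Nat.card_congr e, Nat.card_sum, Nat.card_eq_fintype_card, Fintype.card_fin,
    Nat.card_eq_fintype_card]

lemma card_idem_cl (hk : 0 < k) :
    Nat.card {x : ↥(Cl n k) // x * x = x} = 1 + Fintype.card (IdemP n) := by
  have e : Option (IdemP n) ≃ {x : ↥(Cl n k) // x * x = x} := by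
    refine Equiv.ofBijective
      (fun a => ⟨⟨toI n k a, toI_mem hk a⟩, Subtype.ext (toI_idem a)⟩) ⟨?_, ?_⟩
    · intro a b hab
      exact toI_inj hk (congrArg (fun z => z.val.val) hab)
    · rintro ⟨⟨q, hq⟩, hi⟩
      obtain ⟨a, ha⟩ := toI_surj hk q hq (congrArg Subtype.val hi)
      exact ⟨a, Subtype.ext (Subtype.ext ha)⟩
  rw [← Nat.card_congr e, Nat.card_congr (Equiv.optionEquivSumPUnit.{0} _), Nat.card_sum,
    Nat.card_eq_fintype_card (α := IdemP n), Nat.card_unique, Nat.add_comm]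

lemma idem_card_eq {M N : Type*} [Monoid M] [Monoid N] (e : M ≃* N) :
    Nat.card {x : M // x * x = x} = Nat.card {y : N // y * y = y} := by
  refine Nat.card_congr ⟨fun x => ⟨e x.1, by rw [← map_mul, x.2]⟩,
    fun y => ⟨e.symm y.1, by rw [← map_mul, y.2]⟩, fun x => Subtype.ext (by simp),
    fun y => Subtype.ext (by simp)⟩

lemma idemP_card_strictMono : StrictMono (fun n => Fintype.card (IdemP n)) := by
  apply strictMono_nat_of_lt_succ
  intro n
  refine Fintype.card_lt_of_injective_of_notMem
    (fun x => ⟨(x.1.1.castSucc, x.1.2.castSucc), by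
      have := x.2; simp only [Fin.coe_castSucc]; omega⟩) ?_
    (b := ⟨(⟨0, by omega⟩, ⟨n, by omega⟩), by simp⟩) ?_
  · rintro ⟨⟨a1, a2⟩, ha⟩ ⟨⟨b1, b2⟩, hb⟩ hab
    have h1 := congrArg (fun z => z.val.1) hab
    have h2 := congrArg (fun z => z.val.2) hab
    simp only at h1 h2
    exact Subtype.ext (Prod.ext (Fin.castSucc_injective n h1) (Fin.castSucc_injective n h2))
  · rintro ⟨⟨⟨a1, a2⟩, ha⟩, hb⟩
    have h2 := congrArg (fun z => z.val.2.val) hb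
    simp only [Fin.coe_castSucc] at h2
    have h3 := a2.isLt
    omega

end SNKaux11

open SNKaux SNKaux2 SNKaux3 SNKaux4 SNKaux5 SNKaux6 SNKaux7 SNKaux8 SNKaux9 SNKaux10 SNKaux11 in
theorem snk_iso_iff (n m k l : ℕ) (hk : 1 ≤ k) (hl : 1 ≤ l)
    (f : PEquiv (Fin (n + k)) (Fin (n + k))) (g : PEquiv (Fin (m + l)) (Fin (m + l)))
    (hf : IsChainCycle f) (hg : IsChainCycle g) :
    Nonempty ((Submonoid.closure {f, f.symm} : Submonoid (PEquiv (Fin (n + k)) (Fin (n + k)))) ≃*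
        (Submonoid.closure {g, g.symm} : Submonoid (PEquiv (Fin (m + l)) (Fin (m + l))))) ↔
      n = m ∧ k = l := by
  constructor
  · rintro ⟨e⟩
    have hfX : f = X n k := icc_eq_mk f hf
    have hgX : g = X m l := icc_eq_mk g hg
    subst hfX; subst hgX
    have h1 : Nat.card {x : ↥(Cl n k) // x * x = x} =
        Nat.card {x : ↥(Cl m l) // x * x = x} := idem_card_eq e
    have a1 := card_idem_cl (n := n) (k := k) hk
    have a2 := card_idem_cl (n := m) (k := l) hl
    have hnm : n = m := idemP_card_strictMono.injective (by omega :
      Fintype.card (IdemP n) = Fintype.card (IdemP m))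
    have h2 : Nat.card ↥(Cl n k) = Nat.card ↥(Cl m l) := Nat.card_congr e.toEquiv
    have b1 := card_cl (n := n) (k := k) hk
    have b2 := card_cl (n := m) (k := l) hl
    subst hnm
    exact ⟨rfl, by omega⟩
  · rintro ⟨rfl, rfl⟩
    have hfg : f = g := (icc_eq_mk f hf).trans (icc_eq_mk g hg).symm
    subst hfg
    exact ⟨MulEquiv.refl _⟩
end

section
/- Every element of the free monogenic inverse monoid on one generator x can be written in the form x^{-a} x^b x^{-b} x^c for some a, b, c ∈ ℕ with a ≤ b and c ≤ b, and distinct triples (a, b, c) with a, c ≤ b give distinct elements. -/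
/-- Formal inverse of a word over the alphabet {x, x⁻¹} (with \`true\` ↦ x, \`false\` ↦ x⁻¹). -/
def winv (w : FreeMonoid Bool) : FreeMonoid Bool :=
  FreeMonoid.ofList ((FreeMonoid.toList w).reverse.map not)

/-- The generator x. -/
def X : FreeMonoid Bool := FreeMonoid.of true

/-- The formal inverse x⁻¹ of the generator. -/
def Xi : FreeMonoid Bool := FreeMonoid.of false

/-- The Vagner relations: \`w w⁻¹ w = w\` and idempotents \`w w⁻¹\` commute. -/
def vagner (u v : FreeMonoid Bool) : Prop :=
  (∃ w, u = w * winv w * w ∧ v = w) ∨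
    (∃ w z, u = w * winv w * (z * winv z) ∧ v = z * winv z * (w * winv w))

/-- The free monogenic inverse monoid, as a quotient of the free monoid on {x, x⁻¹}
by the Vagner congruence. -/
def fimCon : Con (FreeMonoid Bool) := conGen vagner

/-! ### Basic `winv` API -/

lemma winv_mul (u v : FreeMonoid Bool) : winv (u * v) = winv v * winv u := by
  simp [winv, FreeMonoid.toList_mul, ← FreeMonoid.ofList_append]

lemma winv_X : winv X = Xi := rfl
lemma winv_Xi : winv Xi = X := rfl

lemma winv_X_pow (n : ℕ) : winv (X ^ n) = Xi ^ n := by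
  induction n with
  | zero => rfl
  | succ n ih => rw [pow_succ, winv_mul, ih, winv_X, pow_succ']

lemma winv_Xi_pow (n : ℕ) : winv (Xi ^ n) = X ^ n := by
  induction n with
  | zero => rfl
  | succ n ih => rw [pow_succ, winv_mul, ih, winv_Xi, pow_succ']

/-! ### Congruence API -/

lemma rel1 (w : FreeMonoid Bool) : fimCon (w * winv w * w) w :=
  ConGen.Rel.of _ _ (Or.inl ⟨w, rfl, rfl⟩)

lemma rel2 (w z : FreeMonoid Bool) :
    fimCon (w * winv w * (z * winv z)) (z * winv z * (w * winv w)) :=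
  ConGen.Rel.of _ _ (Or.inr ⟨w, z, rfl, rfl⟩)

def NF (a b c : ℕ) : FreeMonoid Bool := Xi ^ a * X ^ b * (Xi ^ b * X ^ c)

lemma mulL (u : FreeMonoid Bool) {a b : FreeMonoid Bool} (h : fimCon a b) :
    fimCon (u * a) (u * b) := fimCon.mul (fimCon.refl u) h

lemma mulR (u : FreeMonoid Bool) {a b : FreeMonoid Bool} (h : fimCon a b) :
    fimCon (a * u) (b * u) := fimCon.mul h (fimCon.refl u)

/-- step by x, c = b case -/
lemma stepX_eq (a b : ℕ) : fimCon (NF a b b * X) (NF a (b + 1) (b + 1)) := by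
  have h1 : fimCon (X ^ b * Xi ^ b * X ^ b) (X ^ b) := by
    have := rel1 (X ^ b); rwa [winv_X_pow] at this
  have h2 : fimCon (X ^ (b + 1)) (X ^ (b + 1) * Xi ^ (b + 1) * X ^ (b + 1)) := by
    have := rel1 (X ^ (b + 1)); rw [winv_X_pow] at this; exact fimCon.symm this
  have hA : fimCon (NF a b b * X) (Xi ^ a * X ^ b * X) := by
    have e1 : NF a b b * X = Xi ^ a * (X ^ b * Xi ^ b * X ^ b) * X := by
      simp [NF, mul_assoc]
    rw [e1]; exact mulR X (mulL (Xi ^ a) h1)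
  have hB : fimCon (Xi ^ a * X ^ b * X) (NF a (b + 1) (b + 1)) := by
    have e2 : Xi ^ a * X ^ b * X = Xi ^ a * X ^ (b + 1) := by
      simp [pow_succ, mul_assoc]
    have e3 : Xi ^ a * (X ^ (b + 1) * Xi ^ (b + 1) * X ^ (b + 1)) = NF a (b + 1) (b + 1) := by
      simp [NF, mul_assoc]
    rw [e2, ← e3]; exact mulL (Xi ^ a) h2
  exact fimCon.trans hA hB

/-- step by x⁻¹, positive exponent case: b = j + k + 1, c = k + 1 -/
lemma stepXi_pos (a j k : ℕ) :
    fimCon (NF a (j + k + 1) (k + 1) * Xi) (NF a (j + k + 1) k) := by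
  have h2 : fimCon (Xi ^ k * X ^ k * (X * Xi)) (X * Xi * (Xi ^ k * X ^ k)) := by
    have := rel2 (Xi ^ k) X; rwa [winv_Xi_pow, winv_X] at this
  have h3 : fimCon (Xi * X * Xi) Xi := by
    have := rel1 Xi; rwa [winv_Xi] at this
  have e1 : Xi ^ (j + k + 1) * X ^ (k + 1) * Xi
      = Xi ^ (j + 1) * (Xi ^ k * X ^ k * (X * Xi)) := by
    rw [show j + k + 1 = (j + 1) + k by ring, pow_add (Xi) (j+1) k, pow_succ X k]
    simp [mul_assoc]
  have e2 : Xi ^ (j + 1) * (X * Xi * (Xi ^ k * X ^ k))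
      = Xi ^ j * (Xi * X * Xi) * (Xi ^ k * X ^ k) := by
    rw [pow_succ Xi j]; simp [mul_assoc]
  have e3 : Xi ^ j * Xi * (Xi ^ k * X ^ k) = Xi ^ (j + k + 1) * X ^ k := by
    rw [show j + k + 1 = (j + 1) + k by ring, pow_add (Xi) (j+1) k, pow_succ Xi j]
    simp [mul_assoc]
  have hinner : fimCon (Xi ^ (j + k + 1) * X ^ (k + 1) * Xi) (Xi ^ (j + k + 1) * X ^ k) := by
    refine fimCon.trans (y := Xi ^ (j + 1) * (X * Xi * (Xi ^ k * X ^ k))) ?_ ?_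
    · rw [e1]; exact mulL _ h2
    · rw [e2, ← e3]; exact mulR _ (mulL _ h3)
  have e4 : NF a (j + k + 1) (k + 1) * Xi
      = Xi ^ a * X ^ (j + k + 1) * (Xi ^ (j + k + 1) * X ^ (k + 1) * Xi) := by
    simp [NF, mul_assoc]
  have e5 : Xi ^ a * X ^ (j + k + 1) * (Xi ^ (j + k + 1) * X ^ k) = NF a (j + k + 1) k := by
    simp [NF, mul_assoc]
  rw [e4, ← e5]
  exact mulL _ hinner

/-- step by x⁻¹, zero exponent case -/
lemma stepXi_zero (a b : ℕ) : fimCon (NF a b 0 * Xi) (NF (a + 1) (b + 1) 0) := by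
  have h2 : fimCon (Xi * X * (X ^ b * Xi ^ b)) (X ^ b * Xi ^ b * (Xi * X)) := by
    have := rel2 Xi (X ^ b); rwa [winv_Xi, winv_X_pow] at this
  have h3 : fimCon (Xi * X * Xi) Xi := by
    have := rel1 Xi; rwa [winv_Xi] at this
  have e1 : NF (a + 1) (b + 1) 0 = Xi ^ a * (Xi * X * (X ^ b * Xi ^ b)) * Xi := by
    rw [NF, pow_zero, mul_one, pow_succ Xi a, pow_succ' X b, pow_succ Xi b]
    simp [mul_assoc]
  have e2 : Xi ^ a * (X ^ b * Xi ^ b * (Xi * X)) * Xi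
      = Xi ^ a * X ^ b * Xi ^ b * (Xi * X * Xi) := by
    simp [mul_assoc]
  have e3 : Xi ^ a * X ^ b * Xi ^ b * Xi = NF a b 0 * Xi := by
    simp [NF, mul_assoc]
  refine fimCon.symm (fimCon.trans (y := Xi ^ a * (X ^ b * Xi ^ b * (Xi * X)) * Xi) ?_ ?_)
  · rw [e1]; exact mulR _ (mulL _ h2)
  · rw [e2, ← e3]; exact mulL _ h3

/-! ### The invariant monoid -/

@[ext] structure Tri where
  lo : ℤ
  hi : ℤ
  en : ℤ
  hlo : lo ≤ 0
  hloe : lo ≤ en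
  hhi : 0 ≤ hi
  hhie : en ≤ hi

instance : Mul Tri :=
  ⟨fun s t => ⟨min s.lo (s.en + t.lo), max s.hi (s.en + t.hi), s.en + t.en,
    le_trans (min_le_left _ _) s.hlo,
    le_trans (min_le_right _ _) (by have := t.hloe; omega),
    le_trans s.hhi (le_max_left _ _),
    le_trans (by have := t.hhie; omega) (le_max_right _ _)⟩⟩
instance : One Tri := ⟨⟨0, 0, 0, le_refl _, le_refl _, le_refl _, le_refl _⟩⟩

@[simp] lemma Tri.mul_lo (s t : Tri) : (s * t).lo = min s.lo (s.en + t.lo) := rfl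
@[simp] lemma Tri.mul_hi (s t : Tri) : (s * t).hi = max s.hi (s.en + t.hi) := rfl
@[simp] lemma Tri.mul_en (s t : Tri) : (s * t).en = s.en + t.en := rfl
@[simp] lemma Tri.one_lo : (1 : Tri).lo = 0 := rfl
@[simp] lemma Tri.one_hi : (1 : Tri).hi = 0 := rfl
@[simp] lemma Tri.one_en : (1 : Tri).en = 0 := rfl

instance : Monoid Tri where
  mul_assoc a b c := by ext <;> simp <;> omega
  one_mul a := by
    obtain ⟨lo, hi, en, h1, h2, h3, h4⟩ := a
    ext <;> simp <;> omega
  mul_one a := by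
    obtain ⟨lo, hi, en, h1, h2, h3, h4⟩ := a
    ext <;> simp <;> omega

def Xt : Tri := ⟨0, 1, 1, by omega, by omega, by omega, by omega⟩
def Xit : Tri := ⟨-1, 0, -1, by omega, by omega, by omega, by omega⟩

def φ : FreeMonoid Bool →* Tri :=
  FreeMonoid.lift (fun b => if b then Xt else Xit)

@[simp] lemma φ_X : φ X = Xt := rfl
@[simp] lemma φ_Xi : φ Xi = Xit := rfl

lemma φ_winv_list (l : List Bool) :
    (φ (winv (FreeMonoid.ofList l))).lo
        = (φ (FreeMonoid.ofList l)).lo - (φ (FreeMonoid.ofList l)).en ∧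
    (φ (winv (FreeMonoid.ofList l))).hi
        = (φ (FreeMonoid.ofList l)).hi - (φ (FreeMonoid.ofList l)).en ∧
    (φ (winv (FreeMonoid.ofList l))).en = -(φ (FreeMonoid.ofList l)).en := by
  induction l with
  | nil => refine ⟨?_, ?_, ?_⟩ <;> rfl
  | cons a l ih =>
    have e1 : winv (FreeMonoid.ofList (a :: l))
        = winv (FreeMonoid.ofList l) * FreeMonoid.of (!a) := by
      simp only [winv, FreeMonoid.toList_ofList, List.reverse_cons, List.map_append,
        List.map_cons, List.map_nil, FreeMonoid.ofList_append]
      rfl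
    have e2 : FreeMonoid.ofList (a :: l) = FreeMonoid.of a * FreeMonoid.ofList l := rfl
    rw [e1, e2, map_mul, map_mul]
    rcases ih with ⟨i1, i2, i3⟩
    cases a <;>
      refine ⟨?_, ?_, ?_⟩ <;>
      simp only [Bool.not_false, Bool.not_true, Tri.mul_lo, Tri.mul_hi, Tri.mul_en,
        i1, i2, i3, show φ (FreeMonoid.of true) = Xt from rfl,
        show φ (FreeMonoid.of false) = Xit from rfl, Xt, Xit] <;> omega

lemma φ_winv (w : FreeMonoid Bool) :
    (φ (winv w)).lo = (φ w).lo - (φ w).en ∧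
    (φ (winv w)).hi = (φ w).hi - (φ w).en ∧
    (φ (winv w)).en = -(φ w).en :=
  φ_winv_list (FreeMonoid.toList w)

lemma φ_X_pow (n : ℕ) :
    (φ (X ^ n)).lo = 0 ∧ (φ (X ^ n)).hi = n ∧ (φ (X ^ n)).en = n := by
  induction n with
  | zero => refine ⟨rfl, ?_, ?_⟩ <;> simp
  | succ n ih =>
    rw [pow_succ, map_mul]
    rcases ih with ⟨i1, i2, i3⟩
    refine ⟨?_, ?_, ?_⟩ <;>
      simp only [Tri.mul_lo, Tri.mul_hi, Tri.mul_en, i1, i2, i3, φ_X, Xt] <;>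
      push_cast <;> omega

lemma φ_Xi_pow (n : ℕ) :
    (φ (Xi ^ n)).lo = -n ∧ (φ (Xi ^ n)).hi = 0 ∧ (φ (Xi ^ n)).en = -n := by
  induction n with
  | zero => refine ⟨?_, rfl, ?_⟩ <;> simp
  | succ n ih =>
    rw [pow_succ, map_mul]
    rcases ih with ⟨i1, i2, i3⟩
    refine ⟨?_, ?_, ?_⟩ <;>
      simp only [Tri.mul_lo, Tri.mul_hi, Tri.mul_en, i1, i2, i3, φ_Xi, Xit] <;>
      push_cast <;> omega

lemma φ_NF {a b c : ℕ} (hab : a ≤ b) (hcb : c ≤ b) :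
    (φ (NF a b c)).lo = -(a : ℤ) ∧ (φ (NF a b c)).hi = (b : ℤ) - a ∧
      (φ (NF a b c)).en = (c : ℤ) - a := by
  have hab' : (a : ℤ) ≤ b := by exact_mod_cast hab
  have hcb' : (c : ℤ) ≤ b := by exact_mod_cast hcb
  obtain ⟨xa1, xa2, xa3⟩ := φ_Xi_pow a
  obtain ⟨xb1, xb2, xb3⟩ := φ_X_pow b
  obtain ⟨yb1, yb2, yb3⟩ := φ_Xi_pow b
  obtain ⟨xc1, xc2, xc3⟩ := φ_X_pow c
  rw [NF, map_mul, map_mul, map_mul]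
  refine ⟨?_, ?_, ?_⟩ <;>
    simp only [Tri.mul_lo, Tri.mul_hi, Tri.mul_en, xa1, xa2, xa3, xb1, xb2, xb3,
      yb1, yb2, yb3, xc1, xc2, xc3] <;> omega

lemma φ_vagner : ∀ u v, vagner u v → φ u = φ v := by
  rintro u v (⟨w, rfl, hv⟩ | ⟨w, z, rfl, rfl⟩)
  · obtain ⟨i1, i2, i3⟩ := φ_winv w
    subst hv
    simp only [map_mul]
    ext <;> simp only [Tri.mul_lo, Tri.mul_hi, Tri.mul_en, i1, i2, i3] <;> omega
  · obtain ⟨i1, i2, i3⟩ := φ_winv w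
    obtain ⟨j1, j2, j3⟩ := φ_winv z
    simp only [map_mul]
    ext <;> simp only [Tri.mul_lo, Tri.mul_hi, Tri.mul_en, i1, i2, i3, j1, j2, j3] <;> omega

lemma φ_const : fimCon ≤ Con.ker φ := Con.conGen_le.mpr fun x y h => φ_vagner x y h

lemma NF_one : NF 0 0 0 = 1 := by simp [NF]

lemma exists_nf (l : List Bool) : ∃ a b c : ℕ, a ≤ b ∧ c ≤ b ∧
    fimCon.mk' (FreeMonoid.ofList l) = fimCon.mk' (NF a b c) := by
  induction l using List.reverseRecOn with
  | nil =>
    refine ⟨0, 0, 0, le_refl _, le_refl _, ?_⟩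
    rw [NF_one]; rfl
  | append_singleton l d ih =>
    obtain ⟨a, b, c, hab, hcb, hs⟩ := ih
    have hstep : ∃ a' b' c', a' ≤ b' ∧ c' ≤ b' ∧
        fimCon (NF a b c * FreeMonoid.of d) (NF a' b' c') := by
      cases d
      · rcases Nat.eq_zero_or_pos c with hc | hc
        · subst hc
          exact ⟨a + 1, b + 1, 0, by omega, by omega, stepXi_zero a b⟩
        · obtain ⟨k, rfl⟩ := Nat.exists_eq_add_of_le hc
          obtain ⟨j, hj⟩ := Nat.exists_eq_add_of_le hcb
          have hb : b = j + k + 1 := by omega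
          subst hb
          exact ⟨a, j + k + 1, k, by omega, by omega, by
            have := stepXi_pos a j k
            rwa [show k + 1 = 1 + k by omega] at this⟩
      · rcases Nat.lt_or_ge c b with hc | hc
        · refine ⟨a, b, c + 1, hab, by omega, ?_⟩
          have : NF a b c * X = NF a b (c + 1) := by simp [NF, pow_succ, mul_assoc]
          rw [show FreeMonoid.of true = X from rfl, this]; exact fimCon.refl _
        · have hcb' : c = b := le_antisymm hcb hc
          subst hcb'
          exact ⟨a, c + 1, c + 1, by omega, le_refl _, stepX_eq a c⟩
    obtain ⟨a', b', c', hab', hcb', hrel⟩ := hstep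
    refine ⟨a', b', c', hab', hcb', ?_⟩
    rw [FreeMonoid.ofList_append, map_mul, hs, ← map_mul]
    have : FreeMonoid.ofList [d] = FreeMonoid.of d := rfl
    rw [this]
    exact fimCon.eq.mpr hrel

theorem free_inverse_monoid_normal_forms :
    (∀ s : fimCon.Quotient, ∃ a b c : ℕ, a ≤ b ∧ c ≤ b ∧
        s = fimCon.mk' (Xi ^ a * X ^ b * (Xi ^ b * X ^ c))) ∧
      ∀ a b c a' b' c' : ℕ, a ≤ b → c ≤ b → a' ≤ b' → c' ≤ b' →
        fimCon.mk' (Xi ^ a * X ^ b * (Xi ^ b * X ^ c)) =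
          fimCon.mk' (Xi ^ a' * X ^ b' * (Xi ^ b' * X ^ c')) →
        a = a' ∧ b = b' ∧ c = c' := by
  constructor
  · intro s
    refine Con.induction_on s ?_
    intro w
    obtain ⟨a, b, c, hab, hcb, hs⟩ := exists_nf (FreeMonoid.toList w)
    refine ⟨a, b, c, hab, hcb, ?_⟩
    have hw : FreeMonoid.ofList (FreeMonoid.toList w) = w := rfl
    rw [hw] at hs
    exact hs
  · intro a b c a' b' c' hab hcb hab' hcb' h
    have hrel : fimCon (NF a b c) (NF a' b' c') := fimCon.eq.mp h
    have hφ : φ (NF a b c) = φ (NF a' b' c') := φ_const hrel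
    obtain ⟨p1, p2, p3⟩ := φ_NF hab hcb
    obtain ⟨q1, q2, q3⟩ := φ_NF hab' hcb'
    rw [hφ] at p1 p2 p3
    rw [q1] at p1; rw [q2] at p2; rw [q3] at p3
    omega
end
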